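/- arXiv:2603.07613 — 2 statements merged into one kernel-verified Lean document; each statement's English description precedes it below -/
import Mathlib

section
/- For p ≥ 2 and all vectors a, b in ℝⁿ, the inequality (|b|^{p-2} b − |a|^{p-2} a) · (b − a) ≥ 2^{2−p} |b − a|^p holds. -/
open scoped RealInnerProductSpace

private lemma splitp1 {x r : ℝ} (hx : 0 ≤ x) (hr : 1 ≤ r) :
    x ^ r = x * x ^ (r - 1) := by
  have h : x ^ ((1 : ℝ) + (r - 1)) = x ^ (1 : ℝ) * x ^ (r - 1) :=
    Real.rpow_add' hx (by intro h; rw [show (1:ℝ) + (r-1) = r by ring] at h; linarith)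
  rw [show (1:ℝ) + (r-1) = r by ring] at h
  simpa [Real.rpow_one] using h

private lemma superadd {r x y : ℝ} (hr : 1 ≤ r) (hx : 0 ≤ x) (hy : 0 ≤ y) :
    x ^ r + y ^ r ≤ (x + y) ^ r := by
  have hxy : 0 ≤ x + y := by linarith
  have hx1 : x ^ (r - 1) ≤ (x + y) ^ (r - 1) :=
    Real.rpow_le_rpow hx (by linarith) (by linarith)
  have hy1 : y ^ (r - 1) ≤ (x + y) ^ (r - 1) :=
    Real.rpow_le_rpow hy (by linarith) (by linarith)
  rw [splitp1 hx hr, splitp1 hy hr, splitp1 hxy hr]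
  have h1 : x * x ^ (r - 1) ≤ x * (x + y) ^ (r - 1) :=
    mul_le_mul_of_nonneg_left hx1 hx
  have h2 : y * y ^ (r - 1) ≤ y * (x + y) ^ (r - 1) :=
    mul_le_mul_of_nonneg_left hy1 hy
  nlinarith [h1, h2]

private lemma splitp2 {x p : ℝ} (hx : 0 ≤ x) (hp : 2 ≤ p) :
    x ^ (p - 2) * x ^ (2 : ℕ) = x ^ p := by
  rw [← Real.rpow_natCast x 2,
    ← Real.rpow_add' hx (by rw [show (p-2) + (2:ℕ) = p by push_cast; ring]; linarith)]
  norm_num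

private lemma splitp3 {x p : ℝ} (hx : 0 ≤ x) (hp : 2 ≤ p) :
    x ^ (p - 2) * x = x ^ (p - 1) := by
  have h : x ^ ((p - 2) + 1) = x ^ (p - 2) * x ^ (1 : ℝ) :=
    Real.rpow_add' hx (by intro h; rw [show (p-2) + 1 = p - 1 by ring] at h; linarith)
  rw [show (p-2) + 1 = p - 1 by ring] at h
  simpa [Real.rpow_one] using h.symm

private lemma sq_rpow_half {x p : ℝ} (hx : 0 ≤ x) :
    ((x ^ (2:ℕ) : ℝ)) ^ (p / 2) = x ^ p := by
  rw [← Real.rpow_natCast x 2, ← Real.rpow_mul hx,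
    show ((2:ℕ):ℝ) * (p/2) = p by push_cast; ring]

private lemma two_rpow_le_one {p : ℝ} (hp : 2 ≤ p) : (2:ℝ) ^ (2 - p) ≤ 1 :=
  Real.rpow_le_one_of_one_le_of_nonpos (by norm_num) (by linarith)

/-- endpoint `c = s*t`, assuming `s ≤ t`. -/
private lemma end1' (p s t : ℝ) (hp : 2 ≤ p) (hs : 0 ≤ s) (hst : s ≤ t) :
    (2:ℝ) ^ (2 - p) * ((t - s) ^ (2:ℕ) : ℝ) ^ (p / 2) ≤
      t ^ p + s ^ p - (t ^ (p - 2) + s ^ (p - 2)) * (s * t) := by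
  have ht : 0 ≤ t := le_trans hs hst
  have h0 : 0 ≤ t - s := by linarith
  rw [sq_rpow_half h0]
  have hsup : s ^ (p - 1) + (t - s) ^ (p - 1) ≤ t ^ (p - 1) := by
    have := superadd (r := p - 1) (by linarith) hs h0
    rw [show s + (t - s) = t by ring] at this
    exact this
  have hrhs : t ^ p + s ^ p - (t ^ (p - 2) + s ^ (p - 2)) * (s * t)
      = (t ^ (p-1) - s ^ (p-1)) * (t - s) := by
    have e1 := splitp1 ht (by linarith : (1:ℝ) ≤ p)
    have e2 := splitp1 hs (by linarith : (1:ℝ) ≤ p)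
    have e3 := splitp3 ht hp
    have e4 := splitp3 hs hp
    rw [show p - 1 = p - 1 by ring] at e1
    nlinarith [e1, e2, e3, e4]
  rw [hrhs]
  have hle1 : (2:ℝ) ^ (2 - p) * (t - s) ^ p ≤ (t - s) ^ p := by
    nlinarith [two_rpow_le_one hp, Real.rpow_nonneg h0 p]
  have hsplit : (t - s) ^ p = (t - s) ^ (p - 1) * (t - s) := by
    have := splitp1 h0 (by linarith : (1:ℝ) ≤ p)
    rw [this]; ring
  have hle2 : (t - s) ^ p ≤ (t ^ (p-1) - s ^ (p-1)) * (t - s) := by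
    rw [hsplit]
    have : (t - s) ^ (p - 1) ≤ t ^ (p-1) - s ^ (p-1) := by linarith
    nlinarith [this, h0]
  linarith

private lemma end1 (p s t : ℝ) (hp : 2 ≤ p) (hs : 0 ≤ s) (ht : 0 ≤ t) :
    (2:ℝ) ^ (2 - p) * ((t - s) ^ (2:ℕ) : ℝ) ^ (p / 2) ≤
      t ^ p + s ^ p - (t ^ (p - 2) + s ^ (p - 2)) * (s * t) := by
  rcases le_total s t with h | h
  · exact end1' p s t hp hs h
  · have := end1' p t s hp ht h
    rw [show (s - t) ^ (2:ℕ) = (t - s) ^ (2:ℕ) by ring] at this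
    linarith

/-- endpoint `c = -(s*t)`. -/
private lemma end2 (p s t : ℝ) (hp : 2 ≤ p) (hs : 0 ≤ s) (ht : 0 ≤ t) :
    (2:ℝ) ^ (2 - p) * ((t + s) ^ (2:ℕ) : ℝ) ^ (p / 2) ≤
      t ^ p + s ^ p + (t ^ (p - 2) + s ^ (p - 2)) * (s * t) := by
  have h0 : 0 ≤ t + s := by linarith
  rw [sq_rpow_half h0]
  have hrhs : t ^ p + s ^ p + (t ^ (p - 2) + s ^ (p - 2)) * (s * t)
      = (t ^ (p-1) + s ^ (p-1)) * (t + s) := by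
    have e1 := splitp1 ht (by linarith : (1:ℝ) ≤ p)
    have e2 := splitp1 hs (by linarith : (1:ℝ) ≤ p)
    have e3 := splitp3 ht hp
    have e4 := splitp3 hs hp
    nlinarith [e1, e2, e3, e4]
  rw [hrhs]
  -- convexity of x ^ (p-1): ((t+s)/2)^(p-1) ≤ (t^(p-1)+s^(p-1))/2
  have hconv := (convexOn_rpow (p := p - 1) (by linarith)).2
    (Set.mem_Ici.mpr ht) (Set.mem_Ici.mpr hs)
    (by norm_num : (0:ℝ) ≤ 1/2) (by norm_num : (0:ℝ) ≤ 1/2) (by norm_num)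
  simp only [smul_eq_mul] at hconv
  -- hconv : (1/2*t + 1/2*s) ^ (p-1) ≤ 1/2 * t^(p-1) + 1/2 * s^(p-1)
  have key : (2:ℝ) ^ (2 - p) * (t + s) ^ (p - 1) ≤ t ^ (p-1) + s ^ (p-1) := by
    have hps : (t + s) ^ (p - 1) = (2:ℝ) ^ (p - 1) * ((t+s)/2) ^ (p - 1) := by
      rw [← Real.mul_rpow (by norm_num) (by linarith),
        show (2:ℝ) * ((t+s)/2) = t + s by ring]
    have h2 : (2:ℝ) ^ (2 - p) * (2:ℝ) ^ (p - 1) = 2 := by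
      rw [← Real.rpow_add (by norm_num : (0:ℝ) < 2)]
      norm_num
    calc (2:ℝ) ^ (2 - p) * (t + s) ^ (p - 1)
        = ((2:ℝ) ^ (2 - p) * (2:ℝ) ^ (p - 1)) * ((t+s)/2) ^ (p - 1) := by
          rw [hps]; ring
      _ = 2 * ((t+s)/2) ^ (p - 1) := by rw [h2]
      _ ≤ t ^ (p-1) + s ^ (p-1) := by
          rw [show (t+s)/2 = 1/2*t + 1/2*s by ring]
          linarith
  have hsplit : (t + s) ^ p = (t + s) ^ (p - 1) * (t + s) := by
    have := splitp1 h0 (by linarith : (1:ℝ) ≤ p)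
    rw [this]; ring
  rw [hsplit]
  nlinarith [key, h0, Real.rpow_nonneg h0 (p - 1), Real.rpow_pos_of_pos (show (0:ℝ) < 2 by norm_num) (2 - p)]

/-- main scalar inequality. -/
private lemma scalar_main (p s t c : ℝ) (hp : 2 ≤ p) (hs : 0 ≤ s) (ht : 0 ≤ t)
    (hc : |c| ≤ s * t) :
    (2:ℝ) ^ (2 - p) * ((t ^ (2:ℕ) + s ^ (2:ℕ) - 2*c : ℝ)) ^ (p / 2) ≤
      t ^ p + s ^ p - (t ^ (p - 2) + s ^ (p - 2)) * c := by
  have hc1 : -(s*t) ≤ c := by cases abs_le.mp hc; linarith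
  have hc2 : c ≤ s*t := (abs_le.mp hc).2
  by_cases hst : s * t = 0
  · have hc0 : c = 0 := by
      have : |c| ≤ 0 := by rw [hst] at hc; exact hc
      simpa using le_antisymm this (abs_nonneg c)
    have harg : t ^ (2:ℕ) + s ^ (2:ℕ) - 2*c = (t - s) ^ (2:ℕ) := by
      rw [hc0]; nlinarith [hst]
    rw [harg, hc0]
    have := end1 p s t hp hs ht
    rw [hst] at this
    linarith
  · have hst' : 0 < s * t := lt_of_le_of_ne (mul_nonneg hs ht) (Ne.symm hst)
    set l : ℝ := (s*t + c)/(2*(s*t)) with hl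
    have hl0 : 0 ≤ l := div_nonneg (by linarith) (by linarith)
    have hl1 : l ≤ 1 := by
      rw [div_le_one (by linarith)]; linarith
    have harg : t ^ (2:ℕ) + s ^ (2:ℕ) - 2*c
        = (1 - l) * ((t + s) ^ (2:ℕ)) + l * ((t - s) ^ (2:ℕ)) := by
      have hl2 : l * (2 * (s * t)) = s * t + c := by
        rw [hl]; exact div_mul_cancel₀ _ (ne_of_gt (by linarith))
      linear_combination 2 * hl2
    have hconv := (convexOn_rpow (p := p/2) (by linarith)).2
      (Set.mem_Ici.mpr (by positivity : (0:ℝ) ≤ (t + s) ^ (2:ℕ)))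
      (Set.mem_Ici.mpr (by positivity : (0:ℝ) ≤ (t - s) ^ (2:ℕ)))
      (by linarith : (0:ℝ) ≤ 1 - l) hl0 (by ring)
    simp only [smul_eq_mul] at hconv
    have h2p : (0:ℝ) ≤ (2:ℝ) ^ (2 - p) := Real.rpow_nonneg (by norm_num) _
    have step1 : (2:ℝ) ^ (2 - p) * ((t ^ (2:ℕ) + s ^ (2:ℕ) - 2*c : ℝ)) ^ (p / 2)
        ≤ (1 - l) * ((2:ℝ) ^ (2-p) * ((t + s) ^ (2:ℕ) : ℝ) ^ (p/2))
          + l * ((2:ℝ) ^ (2-p) * ((t - s) ^ (2:ℕ) : ℝ) ^ (p/2)) := by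
      rw [harg]
      nlinarith [mul_le_mul_of_nonneg_left hconv h2p]
    have he1 := end1 p s t hp hs ht
    have he2 := end2 p s t hp hs ht
    have step2 : (1 - l) * ((2:ℝ) ^ (2-p) * ((t + s) ^ (2:ℕ) : ℝ) ^ (p/2))
          + l * ((2:ℝ) ^ (2-p) * ((t - s) ^ (2:ℕ) : ℝ) ^ (p/2))
        ≤ (1 - l) * (t ^ p + s ^ p + (t ^ (p - 2) + s ^ (p - 2)) * (s * t))
          + l * (t ^ p + s ^ p - (t ^ (p - 2) + s ^ (p - 2)) * (s * t)) := by
      have := mul_le_mul_of_nonneg_left he2 (by linarith : (0:ℝ) ≤ 1 - l)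
      have := mul_le_mul_of_nonneg_left he1 hl0
      nlinarith [mul_le_mul_of_nonneg_left he2 (by linarith : (0:ℝ) ≤ 1 - l),
        mul_le_mul_of_nonneg_left he1 hl0]
    have step3 : (1 - l) * (t ^ p + s ^ p + (t ^ (p - 2) + s ^ (p - 2)) * (s * t))
          + l * (t ^ p + s ^ p - (t ^ (p - 2) + s ^ (p - 2)) * (s * t))
        = t ^ p + s ^ p - (t ^ (p - 2) + s ^ (p - 2)) * c := by
      have hl2 : l * (2 * (s * t)) = s * t + c := by
        rw [hl]; exact div_mul_cancel₀ _ (ne_of_gt (by linarith))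
      linear_combination (-(t ^ (p - 2) + s ^ (p - 2))) * hl2
    linarith

/-- Strong monotonicity of the p-Laplacian nonlinearity for `p ≥ 2`. -/
theorem pLaplace_strong_monotonicity (n : ℕ) (p : ℝ) (hp : 2 ≤ p)
    (a b : EuclideanSpace ℝ (Fin n)) :
    (2 : ℝ) ^ (2 - p) * ‖b - a‖ ^ p ≤
      ⟪(‖b‖ ^ (p - 2)) • b - (‖a‖ ^ (p - 2)) • a, b - a⟫ := by
  set s : ℝ := ‖a‖ with hsdef
  set t : ℝ := ‖b‖ with htdef
  set c : ℝ := ⟪a, b⟫ with hcdef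
  have hs : 0 ≤ s := norm_nonneg a
  have ht : 0 ≤ t := norm_nonneg b
  have hc : |c| ≤ s * t := abs_real_inner_le_norm a b
  have hinner : ⟪(t ^ (p - 2)) • b - (s ^ (p - 2)) • a, b - a⟫
      = t ^ (p - 2) * t ^ (2:ℕ) + s ^ (p - 2) * s ^ (2:ℕ)
        - (t ^ (p - 2) + s ^ (p - 2)) * c := by
    simp only [inner_sub_left, inner_sub_right, real_inner_smul_left,
      real_inner_self_eq_norm_sq, real_inner_comm a b, ← hsdef, ← htdef, ← hcdef]
    ring
  have hd2 : ‖b - a‖ ^ (2:ℕ) = t ^ (2:ℕ) + s ^ (2:ℕ) - 2 * c := by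
    rw [norm_sub_sq_real, real_inner_comm a b, ← hsdef, ← htdef, ← hcdef]
    ring
  have hdp : ‖b - a‖ ^ p = ((t ^ (2:ℕ) + s ^ (2:ℕ) - 2*c : ℝ)) ^ (p / 2) := by
    rw [← hd2, sq_rpow_half (norm_nonneg _)]
  rw [hinner, hdp, splitp2 ht hp, splitp2 hs hp]
  exact scalar_main p s t c hp hs ht hc
end

section
/- For 1 < p < 2 and all vectors a, b in ℝⁿ with (a, b) ≠ (0, 0), the inequality (|b|^{p-2} b − |a|^{p-2} a) · (b − a) ≥ (p−1) |b − a|² / (|a| + |b|)^{2−p} holds. -/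
open scoped RealInnerProductSpace

open Real

private lemma rpow_shift {p x : ℝ} (hp1 : 1 < p) (hp2 : p < 2) (hx : 0 ≤ x) :
    x ^ (p - 2) * x = x ^ (p - 1) := by
  rcases hx.eq_or_lt with h | h
  · rw [← h, Real.zero_rpow (by linarith), Real.zero_rpow (by linarith), zero_mul]
  · rw [show p - 1 = (p - 2) + 1 by ring, Real.rpow_add_one h.ne' (p - 2)]

private lemma rpow_subadd {q s t : ℝ} (hq0 : 0 ≤ q) (hq1 : q ≤ 1) (hs : 0 ≤ s) (ht : 0 ≤ t) :
    (s + t) ^ q ≤ s ^ q + t ^ q := by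
  have h := NNReal.rpow_add_le_add_rpow (⟨s, hs⟩ : NNReal) (⟨t, ht⟩ : NNReal) hq0 hq1
  have h2 := NNReal.coe_le_coe.2 h
  push_cast at h2
  exact h2

/-- Concavity bound: for `0 ≤ t ≤ s` with `0 < s + t`,
`(p-1) * (s+t)^(p-2) * (s-t) ≤ s^(p-1) - t^(p-1)`. -/
private lemma helper_mono {p s t : ℝ} (hp1 : 1 < p) (hp2 : p < 2)
    (ht : 0 ≤ t) (hts : t ≤ s) (hpos : 0 < s + t) :
    (p - 1) * (s + t) ^ (p - 2) * (s - t) ≤ s ^ (p - 1) - t ^ (p - 1) := by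
  have hs : 0 < s := by linarith
  set u : ℝ := t / s with hu
  have hu0 : 0 ≤ u := div_nonneg ht hs.le
  have hu1 : u ≤ 1 := (div_le_one hs).2 hts
  have hts' : t = u * s := by rw [hu, div_mul_cancel₀ t hs.ne']
  have hbern : u ^ (p - 1) ≤ 1 + (p - 1) * (u - 1) := by
    have := rpow_one_add_le_one_add_mul_self (s := u - 1) (by linarith)
      (p := p - 1) (by linarith) (by linarith)
    simpa using this
  have htp : t ^ (p - 1) = u ^ (p - 1) * s ^ (p - 1) := by
    rw [hts', Real.mul_rpow hu0 hs.le]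
  have hsp1 : (0:ℝ) < s ^ (p - 1) := Real.rpow_pos_of_pos hs _
  have key : (p - 1) * s ^ (p - 2) * (s - t) ≤ s ^ (p - 1) - t ^ (p - 1) := by
    have h1 : s ^ (p - 1) - t ^ (p - 1) = s ^ (p - 1) * (1 - u ^ (p - 1)) := by
      rw [htp]; ring
    have h3 : (p - 1) * (1 - u) ≤ 1 - u ^ (p - 1) := by linarith
    have h4 : s ^ (p - 1) * ((p - 1) * (1 - u)) ≤ s ^ (p - 1) * (1 - u ^ (p - 1)) :=
      mul_le_mul_of_nonneg_left h3 hsp1.le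
    have h5 : s ^ (p - 1) * (1 - u) = s ^ (p - 2) * (s - t) := by
      have h6 : s ^ (p - 2) * s = s ^ (p - 1) := rpow_shift hp1 hp2 hs.le
      rw [hts']
      nlinarith [h6]
    nlinarith [h4, h5]
  have hmono : (s + t) ^ (p - 2) ≤ s ^ (p - 2) :=
    Real.rpow_le_rpow_of_nonpos hs (by linarith) (by linarith)
  have hst : 0 ≤ s - t := by linarith
  nlinarith [mul_le_mul_of_nonneg_right hmono hst, key, hp1]

/-- The scalar version of the monotonicity inequality. -/
private lemma key_lemma {p s t c : ℝ} (hp1 : 1 < p) (hp2 : p < 2)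
    (hs : 0 ≤ s) (ht : 0 ≤ t) (hst : 0 < s + t)
    (hc1 : -(s * t) ≤ c) (hc2 : c ≤ s * t) :
    (p - 1) * (s ^ 2 + t ^ 2 - 2 * c) / (s + t) ^ (2 - p) ≤
      s ^ (p - 2) * s ^ 2 + t ^ (p - 2) * t ^ 2 - (s ^ (p - 2) + t ^ (p - 2)) * c := by
  have hD0 : (0:ℝ) < (s + t) ^ (p - 2) := Real.rpow_pos_of_pos hst _
  have hsA : s ^ (p - 2) * s = s ^ (p - 1) := rpow_shift hp1 hp2 hs
  have htB : t ^ (p - 2) * t = t ^ (p - 1) := rpow_shift hp1 hp2 ht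
  have hstD : (s + t) ^ (p - 2) * (s + t) = (s + t) ^ (p - 1) := rpow_shift hp1 hp2 hst.le
  have hinv : ((s + t) ^ (2 - p))⁻¹ = (s + t) ^ (p - 2) := by
    rw [← Real.rpow_neg hst.le, show -(2 - p) = p - 2 by ring]
  have hdiv : (p - 1) * (s ^ 2 + t ^ 2 - 2 * c) / (s + t) ^ (2 - p)
      = (p - 1) * (s ^ 2 + t ^ 2 - 2 * c) * ((s + t) ^ (p - 2)) := by
    rw [div_eq_mul_inv, hinv]
  rw [hdiv]
  have hsA2 : s ^ (p - 2) * s ^ 2 = s ^ (p - 1) * s := by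
    rw [pow_two, ← mul_assoc, hsA]
  have htB2 : t ^ (p - 2) * t ^ 2 = t ^ (p - 1) * t := by
    rw [pow_two, ← mul_assoc, htB]
  have hKst : s ^ (p - 1) * t + t ^ (p - 1) * s = (s ^ (p - 2) + t ^ (p - 2)) * (s * t) := by
    rw [← hsA, ← htB]; ring
  -- endpoint E1 : collinear same direction
  have hE1 : (p - 1) * (s + t) ^ (p - 2) * (s - t) ^ 2
      ≤ s ^ (p - 1) * s + t ^ (p - 1) * t - s ^ (p - 1) * t - t ^ (p - 1) * s := by
    rcases le_total t s with h | h
    · have h1 := helper_mono hp1 hp2 ht h hst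
      have h2 := mul_le_mul_of_nonneg_right h1 (sub_nonneg.2 h)
      nlinarith [h2]
    · have hst' : 0 < t + s := by linarith
      have h1 := helper_mono hp1 hp2 hs h hst'
      have h2 := mul_le_mul_of_nonneg_right h1 (sub_nonneg.2 h)
      rw [add_comm t s] at h2
      nlinarith [h2]
  -- endpoint E2 : collinear opposite direction
  have hE2 : (p - 1) * (s + t) ^ (p - 2) * (s + t) ^ 2
      ≤ s ^ (p - 1) * s + t ^ (p - 1) * t + s ^ (p - 1) * t + t ^ (p - 1) * s := by
    have hsub : (s + t) ^ (p - 1) ≤ s ^ (p - 1) + t ^ (p - 1) :=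
      rpow_subadd (by linarith) (by linarith) hs ht
    have hnn : (0:ℝ) ≤ (s + t) ^ (p - 1) := Real.rpow_nonneg hst.le _
    have h1 : (p - 1) * (s + t) ^ (p - 1) ≤ s ^ (p - 1) + t ^ (p - 1) := by
      have := mul_le_mul_of_nonneg_right (show p - 1 ≤ 1 by linarith) hnn
      linarith
    have h2 := mul_le_mul_of_nonneg_right h1 hst.le
    have h3 : (p - 1) * (s + t) ^ (p - 2) * (s + t) ^ 2
        = (p - 1) * (s + t) ^ (p - 1) * (s + t) := by
      rw [← hstD]; ring
    nlinarith [h2, h3]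
  rcases le_total (s ^ (p - 2) + t ^ (p - 2)) (2 * (p - 1) * (s + t) ^ (p - 2)) with h | h
  · have hprod : 0 ≤ (2 * (p - 1) * (s + t) ^ (p - 2) - (s ^ (p - 2) + t ^ (p - 2)))
        * (c + s * t) := mul_nonneg (by linarith) (by linarith)
    linarith [hE2, hprod, hKst, hsA2, htB2]
  · have hprod : 0 ≤ ((s ^ (p - 2) + t ^ (p - 2)) - 2 * (p - 1) * (s + t) ^ (p - 2))
        * (s * t - c) := mul_nonneg (by linarith) (by linarith)
    linarith [hE1, hprod, hKst, hsA2, htB2]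

/-- Monotonicity of the p-Laplacian nonlinearity in the singular regime `1 < p < 2`. -/
theorem pLaplace_monotonicity_singular (n : ℕ) (p : ℝ) (hp1 : 1 < p) (hp2 : p < 2)
    (a b : EuclideanSpace ℝ (Fin n)) (hab : ¬(a = 0 ∧ b = 0)) :
    (p - 1) * ‖b - a‖ ^ (2 : ℝ) / (‖a‖ + ‖b‖) ^ (2 - p) ≤
      ⟪(‖b‖ ^ (p - 2)) • b - (‖a‖ ^ (p - 2)) • a, b - a⟫ := by
  have hst : 0 < ‖a‖ + ‖b‖ := by
    rcases (norm_nonneg a).eq_or_lt with h | h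
    · rcases (norm_nonneg b).eq_or_lt with h' | h'
      · exact absurd ⟨norm_eq_zero.1 h.symm, norm_eq_zero.1 h'.symm⟩ hab
      · linarith
    · linarith [norm_nonneg b]
  have hcs := abs_real_inner_le_norm a b
  have hc1 : -(‖a‖ * ‖b‖) ≤ ⟪a, b⟫ := neg_le_of_abs_le hcs
  have hc2 : ⟪a, b⟫ ≤ ‖a‖ * ‖b‖ := le_of_abs_le hcs
  have hinner : ⟪(‖b‖ ^ (p - 2)) • b - (‖a‖ ^ (p - 2)) • a, b - a⟫
      = ‖a‖ ^ (p - 2) * ‖a‖ ^ 2 + ‖b‖ ^ (p - 2) * ‖b‖ ^ 2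
        - (‖a‖ ^ (p - 2) + ‖b‖ ^ (p - 2)) * ⟪a, b⟫ := by
    simp only [inner_sub_left, inner_sub_right, real_inner_smul_left,
      real_inner_self_eq_norm_sq]
    rw [real_inner_comm b a]
    ring
  have hnorm : ‖b - a‖ ^ (2 : ℝ) = ‖a‖ ^ 2 + ‖b‖ ^ 2 - 2 * ⟪a, b⟫ := by
    rw [show (2:ℝ) = ((2:ℕ):ℝ) by norm_num, Real.rpow_natCast, norm_sub_sq_real,
      real_inner_comm b a]
    ring
  rw [hinner, hnorm]
  exact key_lemma hp1 hp2 (norm_nonneg a) (norm_nonneg b) hst hc1 hc2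
end
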